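/- There exists r₁ = r₁(d,m) with the following property. Let V be a finite family of closed balls in ℝ^d with radii in [1,m]. Suppose y ∈ ℝ^d and ρ ∈ [1,m] satisfy r = |y| ≥ r₁, no ball of V has its center in B(0, r − ρ + 0.01), and B(y,ρ) intersects no ball of V. Let y' be the point on the segment [0,y] with |y' − y| = ρ + 1. Then the distance from y' to every ball in V is at least 1 + 0.001/m. -/

import Mathlib

open Metric Set
open scoped RealInnerProductSpace

/- Purely real-arithmetic core of the argument, in the coordinates
`r = |y|`, `a` = axial component of the center, `R` = norm of the center. -/
set_option maxHeartbeats 1600000 in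
private lemma retraction_aux (m ρ τ r a R ε : ℝ) (hm : (1.1:ℝ) ≤ m)
    (hρ1 : 1 ≤ ρ) (hρm : ρ ≤ m) (hτ1 : 1 ≤ τ) (hτm : τ ≤ m)
    (hr : 1000*(m+2)^2 + 100*m + 100 ≤ r)
    (hε0 : 0 < ε) (hεle : ε ≤ 0.001) (hεm : ε * m = 0.001)
    (hd1 : r - ρ + 0.01 ≤ R)
    (ha2 : a^2 ≤ R^2)
    (hd2 : (ρ + τ)^2 ≤ r^2 - 2*(a*r) + R^2) :
    (τ + 1 + ε)^2 ≤ (r - ρ - 1 - a)^2 + (R^2 - a^2) := by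
  have hsq : (0:ℝ) ≤ (m+2)^2 := sq_nonneg _
  have hm0 : (0:ℝ) < m := by linarith
  rcases le_or_gt (r - ρ + 0.005) a with hcase | hcase
  · -- a large: use the separation of the two centers
    nlinarith [hd2,
      mul_nonneg (by linarith : (0:ℝ) ≤ τ) (by linarith : (0:ℝ) ≤ ρ - 1),
      mul_nonneg (by linarith : (0:ℝ) ≤ m - τ) hε0.le,
      mul_nonneg (by linarith : (0:ℝ) ≤ ρ + 1)
        (by linarith : (0:ℝ) ≤ a - (r - ρ + 0.005)),
      mul_le_mul hεle hεle hε0.le (by norm_num : (0:ℝ) ≤ 0.001)]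
  rcases le_or_gt (r/2) a with hc2 | hc2
  · -- middle range: the perpendicular component is huge
    have hF1 : (r - ρ + 0.01)^2 ≤ R^2 := by
      have h0 : (0:ℝ) ≤ r - ρ + 0.01 := by nlinarith
      exact pow_le_pow_left₀ h0 hd1 2
    have h1 : (0.005:ℝ) ≤ (r - a) - ρ + 0.01 := by linarith
    have h2 : 1.5*r - m ≤ r + a - ρ + 0.01 := by linarith
    have h3 : (0:ℝ) ≤ 1.5*r - m := by nlinarith
    have h4 : 0.005*(1.5*r - m) ≤ ((r - a) - ρ + 0.01)*(r + a - ρ + 0.01) :=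
      mul_le_mul h1 h2 h3 (by linarith)
    have h5 : τ + 1 + ε ≤ m + 1.001 := by linarith
    have h6 : (τ + 1 + ε)^2 ≤ (m + 1.001)^2 :=
      pow_le_pow_left₀ (by linarith) h5 2
    have h7 : (m + 1.001)^2 ≤ 0.005*(1.5*r - m) := by nlinarith [sq_nonneg m]
    nlinarith [hF1, h4, h6, h7, sq_nonneg (r - ρ - 1 - a)]
  · -- a small: the target point is far along the axis already
    have h6 : τ + 1 + ε ≤ r - ρ - 1 - a := by nlinarith
    have h7 : (τ + 1 + ε)^2 ≤ (r - ρ - 1 - a)^2 :=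
      pow_le_pow_left₀ (by linarith) h6 2
    linarith [ha2]

private lemma le_of_sq_le_sq'' (c D : ℝ) (h : c^2 ≤ D^2) (hc : 0 < c) (hD : 0 ≤ D) :
    c ≤ D := by
  nlinarith [sq_nonneg (D - c)]

set_option maxHeartbeats 1600000 in
theorem retraction_point_far (d : ℕ) (m : ℝ) (hm : (1.1 : ℝ) ≤ m) :
    ∃ r₁ : ℝ, ∀ V : Finset (EuclideanSpace ℝ (Fin d) × ℝ),
      (∀ p ∈ V, p.2 ∈ Set.Icc (1 : ℝ) m) →
      ∀ y : EuclideanSpace ℝ (Fin d), ∀ ρ : ℝ, ρ ∈ Set.Icc (1 : ℝ) m →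
        r₁ ≤ ‖y‖ →
        (∀ p ∈ V, p.1 ∉ closedBall (0 : EuclideanSpace ℝ (Fin d)) (‖y‖ - ρ + 0.01)) →
        (∀ p ∈ V, closedBall y ρ ∩ closedBall p.1 p.2 = ∅) →
      ∀ y' ∈ segment ℝ (0 : EuclideanSpace ℝ (Fin d)) y, dist y' y = ρ + 1 →
        ∀ p ∈ V, 1 + 0.001 / m ≤ dist y' p.1 - p.2 := by
  refine ⟨1000*(m+2)^2 + 100*m + 100, ?_⟩
  intro V hV y ρ hρ hr hcent hint y' hy' hdy' p hp
  obtain ⟨hρ1, hρm⟩ := hρ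
  obtain ⟨hτ1, hτm⟩ := hV p hp
  have hm0 : (0:ℝ) < m := by linarith
  have hε0 : (0:ℝ) < 0.001 / m := by positivity
  have hεm : (0.001 / m) * m = 0.001 := by field_simp
  have hεle : (0.001 / m : ℝ) ≤ 0.001 := by
    rw [div_le_iff₀ hm0]; nlinarith
  have hsq : (0:ℝ) ≤ (m+2)^2 := sq_nonneg _
  have hrbig : 1000*(m+2)^2 + 100*m + 100 ≤ ‖y‖ := hr
  have hr0 : (0:ℝ) < ‖y‖ := by nlinarith
  -- center is far from origin
  have hd1 : ‖y‖ - ρ + 0.01 < ‖p.1‖ := by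
    have h := hcent p hp
    simp only [mem_closedBall, dist_zero_right] at h
    push_neg at h
    exact h
  -- balls don't intersect ⇒ centers are separated
  have hsep : ρ + p.2 ≤ dist y p.1 := by
    by_contra hcon
    push_neg at hcon
    have hpt : (0:ℝ) < ρ + p.2 := by linarith
    have ht0 : (0:ℝ) ≤ ρ / (ρ + p.2) := div_nonneg (by linarith) hpt.le
    have ht1 : ρ / (ρ + p.2) ≤ 1 := by rw [div_le_one hpt]; linarith
    have hw : y + (ρ / (ρ + p.2)) • (p.1 - y) ∈ closedBall y ρ ∩ closedBall p.1 p.2 := by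
      constructor
      · rw [mem_closedBall, dist_eq_norm]
        have h1 : y + (ρ / (ρ + p.2)) • (p.1 - y) - y = (ρ / (ρ + p.2)) • (p.1 - y) := by
          module
        rw [h1, norm_smul, Real.norm_of_nonneg ht0]
        have h2 : ‖p.1 - y‖ ≤ ρ + p.2 := by
          rw [← dist_eq_norm, dist_comm]; exact hcon.le
        have h3 : (ρ / (ρ + p.2)) * (ρ + p.2) = ρ := div_mul_cancel₀ _ hpt.ne'
        nlinarith [mul_le_mul_of_nonneg_left h2 ht0]
      · rw [mem_closedBall, dist_eq_norm]
        have h1 : y + (ρ / (ρ + p.2)) • (p.1 - y) - p.1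
            = (1 - ρ / (ρ + p.2)) • (y - p.1) := by module
        rw [h1, norm_smul, Real.norm_of_nonneg (by linarith : (0:ℝ) ≤ 1 - ρ / (ρ + p.2))]
        have h2 : ‖y - p.1‖ ≤ ρ + p.2 := by rw [← dist_eq_norm]; exact hcon.le
        have h3 : (1 - ρ / (ρ + p.2)) * (ρ + p.2) = p.2 := by
          field_simp
          ring
        nlinarith [mul_le_mul_of_nonneg_left h2
          (by linarith : (0:ℝ) ≤ 1 - ρ / (ρ + p.2))]
    rw [hint p hp] at hw
    exact hw
  -- the point y' on the segment
  obtain ⟨α, β, hα, hβ, hαβ, hy'eq⟩ := hy'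
  have hy'β : y' = β • y := by rw [← hy'eq]; simp
  have hβ1 : β ≤ 1 := by linarith
  have hb : (1 - β) * ‖y‖ = ρ + 1 := by
    have h1 : β • y - y = (β - 1) • y := by module
    rw [hy'β, dist_eq_norm, h1, norm_smul, Real.norm_eq_abs,
      abs_of_nonpos (by linarith : β - 1 ≤ 0)] at hdy'
    linear_combination hdy'
  have hβr : β * ‖y‖ = ‖y‖ - ρ - 1 := by linear_combination -hb
  -- distances via inner products
  have hd2 : (ρ + p.2)^2 ≤ ‖y‖^2 - 2*⟪y, p.1⟫ + ‖p.1‖^2 := by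
    have h1 : dist y p.1 ^ 2 = ‖y‖^2 - 2*⟪y, p.1⟫ + ‖p.1‖^2 := by
      rw [dist_eq_norm, norm_sub_sq_real]
    have h2 : (ρ + p.2)^2 ≤ dist y p.1 ^ 2 := pow_le_pow_left₀ (by linarith) hsep 2
    linarith [h1 ▸ h2]
  have hA2 : ⟪y, p.1⟫^2 ≤ ‖y‖^2 * ‖p.1‖^2 := by
    have h := abs_real_inner_le_norm y p.1
    calc ⟪y, p.1⟫^2 = |⟪y, p.1⟫|^2 := (sq_abs _).symm
      _ ≤ (‖y‖ * ‖p.1‖)^2 := pow_le_pow_left₀ (abs_nonneg _) h 2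
      _ = ‖y‖^2 * ‖p.1‖^2 := by ring
  have hD2 : dist y' p.1 ^ 2 = (β*‖y‖)^2 - 2*(β*⟪y, p.1⟫) + ‖p.1‖^2 := by
    rw [hy'β, dist_eq_norm, norm_sub_sq_real, norm_smul, real_inner_smul_left,
      Real.norm_of_nonneg hβ]
  -- introduce the axial coordinate a = ⟪y,z⟫/‖y‖
  have hAa : ⟪y, p.1⟫ = (⟪y, p.1⟫ / ‖y‖) * ‖y‖ := by field_simp
  set a : ℝ := ⟪y, p.1⟫ / ‖y‖ with hadef
  have ha2 : a^2 ≤ ‖p.1‖^2 := by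
    have h : a^2 * ‖y‖^2 ≤ ‖p.1‖^2 * ‖y‖^2 := by
      calc a^2 * ‖y‖^2 = (a * ‖y‖)^2 := by ring
        _ = ⟪y, p.1⟫^2 := by rw [← hAa]
        _ ≤ ‖y‖^2 * ‖p.1‖^2 := hA2
        _ = ‖p.1‖^2 * ‖y‖^2 := by ring
    exact le_of_mul_le_mul_right h (by positivity)
  have hD2' : dist y' p.1 ^ 2 = (‖y‖ - ρ - 1 - a)^2 + (‖p.1‖^2 - a^2) := by
    rw [hD2, hAa, ← hβr]; ring
  rw [hAa] at hd2
  have hd2' : (ρ + p.2)^2 ≤ ‖y‖^2 - 2*(a*‖y‖) + ‖p.1‖^2 := by linarith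
  -- key quadratic estimate via the auxiliary lemma
  have hkey : (p.2 + 1 + 0.001/m)^2 ≤ dist y' p.1 ^ 2 := by
    rw [hD2']
    exact retraction_aux m ρ p.2 ‖y‖ a ‖p.1‖ (0.001/m) hm hρ1 hρm hτ1 hτm hrbig
      hε0 hεle hεm hd1.le ha2 hd2'
  have hfin : p.2 + 1 + 0.001/m ≤ dist y' p.1 :=
    le_of_sq_le_sq'' _ _ hkey (by linarith) dist_nonneg
  linarith
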